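/- If a connected finite graph G admits a Tanaka quintuple, then G is of non-QE class, i.e., there exists a real function f on the vertices with sum zero such that Σ_{x,y} d(x,y) f(x) f(y) > 0. -/

import Mathlib

/-- A Tanaka quintuple in a graph `G`. -/
def TanakaQuintuple {V : Type*} (G : SimpleGraph V) (v1 v2 v3 v4 v5 : V) : Prop :=
  G.Adj v1 v2 ∧ G.Adj v3 v4 ∧
  G.dist v1 v3 = G.dist v2 v4 ∧
  G.dist v1 v4 = G.dist v1 v3 + 1 ∧
  G.dist v2 v3 = G.dist v1 v3 + 1 ∧
  G.dist v5 v2 = G.dist v5 v1 + 1 ∧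
  G.dist v5 v3 = G.dist v5 v4 + 1

lemma aux_pos (p : ℝ) (hp0 : 0 ≤ p) : 0 < -(p * (1 + p)⁻¹ ^ 2 * 2) + (1 + p)⁻¹ * 4 := by
  have h1 : (0:ℝ) < 1 + p := by linarith
  have h2 : -(p * (1 + p)⁻¹ ^ 2 * 2) + (1 + p)⁻¹ * 4 = (2 * p + 4) * ((1 + p)⁻¹) ^ 2 := by
    field_simp
    ring
  rw [h2]
  positivity

/-- If a connected finite graph admits a Tanaka quintuple then it is of non-QE class. -/
theorem stmt5 {V : Type*} [Fintype V] (G : SimpleGraph V) (hG : G.Connected)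
    (v1 v2 v3 v4 v5 : V) (h : TanakaQuintuple G v1 v2 v3 v4 v5) :
    ∃ f : V → ℝ, (∑ x, f x) = 0 ∧
      0 < ∑ x, ∑ y, (G.dist x y : ℝ) * f x * f y := by
  classical
  obtain ⟨h12, h34, h13, h14, h23, h52, h53⟩ := h
  set k : ℝ := (G.dist v1 v3 : ℝ) with hk
  set p : ℝ := (G.dist v5 v1 : ℝ) with hp
  set q : ℝ := (G.dist v5 v4 : ℝ) with hq
  have hp0 : 0 ≤ p := by positivity
  have hp1 : (0:ℝ) < p + 1 := by linarith
  set t : ℝ := -(1/(p+1)) with ht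
  have htp : t * (p + 1) = -1 := by
    rw [ht]; field_simp
  have ht0 : t < 0 := by
    rw [ht]; simp; positivity
  -- distance facts as reals
  have e12 : (G.dist v1 v2 : ℝ) = 1 := by
    rw [SimpleGraph.dist_eq_one_iff_adj.mpr h12]; norm_num
  have e34 : (G.dist v3 v4 : ℝ) = 1 := by
    rw [SimpleGraph.dist_eq_one_iff_adj.mpr h34]; norm_num
  have e21 : (G.dist v2 v1 : ℝ) = 1 := by rw [G.dist_comm]; exact e12
  have e43 : (G.dist v4 v3 : ℝ) = 1 := by rw [G.dist_comm]; exact e34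
  have e13 : (G.dist v1 v3 : ℝ) = k := rfl
  have e31 : (G.dist v3 v1 : ℝ) = k := by rw [G.dist_comm]
  have e24 : (G.dist v2 v4 : ℝ) = k := by rw [hk, ← h13]
  have e42 : (G.dist v4 v2 : ℝ) = k := by rw [G.dist_comm]; exact e24
  have e14 : (G.dist v1 v4 : ℝ) = k + 1 := by rw [hk, h14]; push_cast; ring
  have e41 : (G.dist v4 v1 : ℝ) = k + 1 := by rw [G.dist_comm]; exact e14
  have e23 : (G.dist v2 v3 : ℝ) = k + 1 := by rw [hk, h23]; push_cast; ring
  have e32 : (G.dist v3 v2 : ℝ) = k + 1 := by rw [G.dist_comm]; exact e23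
  have e51 : (G.dist v5 v1 : ℝ) = p := rfl
  have e15 : (G.dist v1 v5 : ℝ) = p := by rw [G.dist_comm]
  have e52 : (G.dist v5 v2 : ℝ) = p + 1 := by rw [hp, h52]; push_cast; ring
  have e25 : (G.dist v2 v5 : ℝ) = p + 1 := by rw [G.dist_comm]; exact e52
  have e54 : (G.dist v5 v4 : ℝ) = q := rfl
  have e45 : (G.dist v4 v5 : ℝ) = q := by rw [G.dist_comm]
  have e53 : (G.dist v5 v3 : ℝ) = q + 1 := by rw [hq, h53]; push_cast; ring
  have e35 : (G.dist v3 v5 : ℝ) = q + 1 := by rw [G.dist_comm]; exact e53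
  have eself : ∀ v : V, (G.dist v v : ℝ) = 0 := fun v => by rw [G.dist_self]; norm_num
  -- the function
  set f : V → ℝ := fun x => (1-t) * (if x = v1 then 1 else 0) - (if x = v2 then 1 else 0)
      - (if x = v3 then 1 else 0) + (if x = v4 then 1 else 0) + t * (if x = v5 then 1 else 0)
    with hf
  have hexp : ∀ g : V → ℝ, (∑ x, f x * g x)
      = (1-t) * g v1 - g v2 - g v3 + g v4 + t * g v5 := by
    intro g
    simp [hf, sub_mul, add_mul, mul_assoc, ite_mul, Finset.sum_add_distrib,
      Finset.sum_sub_distrib, Finset.mul_sum, Finset.sum_ite_eq']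
  refine ⟨f, ?_, ?_⟩
  · have := hexp (fun _ => 1)
    simp only [mul_one] at this
    rw [this]; ring
  · have key : (∑ x, ∑ y, (G.dist x y : ℝ) * f x * f y)
        = ∑ x, f x * ((1-t) * (G.dist x v1 : ℝ) - (G.dist x v2 : ℝ) - (G.dist x v3 : ℝ)
            + (G.dist x v4 : ℝ) + t * (G.dist x v5 : ℝ)) := by
      refine Finset.sum_congr rfl fun x _ => ?_
      rw [← hexp (fun y => (G.dist x y : ℝ))]
      rw [Finset.mul_sum]
      exact Finset.sum_congr rfl fun y _ => by ring
    rw [key, hexp]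
    simp only [eself, e12, e21, e34, e43, e13, e31, e24, e42, e14, e41, e23, e32,
      e15, e51, e25, e52, e45, e54, e35, e53]
    ring_nf
    have htt : t ^ 2 * p = -t - t ^ 2 := by linear_combination t * htp
    nlinarith [htt, ht0, sq_nonneg t]
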